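/- arXiv:2406.13668 — 7 statements merged into one kernel-verified Lean document; each statement's English description precedes it below -/
import Mathlib

section
/- Let t₀, t₁, t₂ be non-negative integers with 1 ≤ t₁ ≤ ⌊t₀/2⌋ and t₂ ≤ ⌈t₀/2⌉, let t = t₀ + t₁ + t₂, and let λ ∈ (1,2), β ∈ (0,1). Then t₁^β + λ·t₂^β ≤ t^β · (1 + 4λ/3)/4^β. -/
theorem stmt_5 (t0 t1 t2 t : ℕ) (lam β : ℝ)
    (ht1 : 1 ≤ t1) (ht1' : t1 ≤ t0 / 2) (ht2 : t2 ≤ (t0 + 1) / 2)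
    (ht : t = t0 + t1 + t2)
    (hlam : lam ∈ Set.Ioo (1:ℝ) 2) (hβ : β ∈ Set.Ioo (0:ℝ) 1) :
    (t1 : ℝ) ^ β + lam * (t2 : ℝ) ^ β ≤ (t : ℝ) ^ β * ((1 + 4 * lam / 3) / 4 ^ β) := by
  obtain ⟨hl1, hl2⟩ := hlam
  obtain ⟨hb0, hb1⟩ := hβ
  have hX : (0:ℝ) ≤ ((t:ℝ)/4) ^ β := Real.rpow_nonneg (by positivity) _
  have key : ((t:ℝ)/3) ^ β ≤ (4/3) * ((t:ℝ)/4) ^ β := by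
    have h1 : ((t:ℝ)/3) = (4/3) * ((t:ℝ)/4) := by ring
    rw [h1, Real.mul_rpow (by norm_num) (by positivity)]
    have h2 : (4/3:ℝ)^β ≤ 4/3 := by
      calc (4/3:ℝ)^β ≤ (4/3:ℝ)^(1:ℝ) :=
            Real.rpow_le_rpow_of_exponent_le (by norm_num) hb1.le
        _ = 4/3 := Real.rpow_one _
    nlinarith
  have hrhs : (t : ℝ) ^ β * ((1 + 4 * lam / 3) / 4 ^ β)
      = (1 + 4 * lam / 3) * ((t:ℝ)/4) ^ β := by
    rw [Real.div_rpow (by positivity) (by norm_num)]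
    have h4 : (0:ℝ) < (4:ℝ)^β := Real.rpow_pos_of_pos (by norm_num) _
    field_simp
  rw [hrhs]
  rcases le_total t1 t2 with h | h
  · have ha : (t1:ℝ) ^ β ≤ ((t:ℝ)/4) ^ β := by
      apply Real.rpow_le_rpow (by positivity) _ hb0.le
      have h4 : 4 * t1 ≤ t := by omega
      have := (Nat.cast_le (α := ℝ)).mpr h4
      push_cast at this ⊢
      linarith
    have hbb : (t2:ℝ) ^ β ≤ ((t:ℝ)/3) ^ β := by
      apply Real.rpow_le_rpow (by positivity) _ hb0.le
      have h3 : 3 * t2 ≤ t := by omega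
      have := (Nat.cast_le (α := ℝ)).mpr h3
      push_cast at this ⊢
      linarith
    nlinarith
  · have ha : (t1:ℝ) ^ β ≤ ((t:ℝ)/3) ^ β := by
      apply Real.rpow_le_rpow (by positivity) _ hb0.le
      have h3 : 3 * t1 ≤ t := by omega
      have := (Nat.cast_le (α := ℝ)).mpr h3
      push_cast at this ⊢
      linarith
    have hbb : (t2:ℝ) ^ β ≤ ((t:ℝ)/4) ^ β := by
      apply Real.rpow_le_rpow (by positivity) _ hb0.le
      have h4 : 4 * t2 ≤ t := by omega
      have := (Nat.cast_le (α := ℝ)).mpr h4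
      push_cast at this ⊢
      linarith
    nlinarith
end

section
/- For β ∈ (0,1) the function q ↦ ((1-q)/3)^β + (2(1-q)/3)^β + q^β is increasing on [0, 1/3]. -/
open Real Set

private lemma pow_convex_aux {a t : ℝ} (ha : 0 < a) (ht0 : 0 ≤ t) (ht1 : t ≤ 1) :
    a ^ t ≤ (1 - t) + t * a := by
  have := Real.geom_mean_le_arith_mean2_weighted (w₁ := 1 - t) (w₂ := t) (p₁ := 1) (p₂ := a)
    (by linarith) ht0 (by norm_num) ha.le (by ring)
  simpa using this

private lemma key_aux {t : ℝ} (ht0 : 0 ≤ t) (ht1 : t ≤ 1) :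
    (1/3 : ℝ) * (3/2) ^ t + (2/3) * (3/4) ^ t ≤ 1 := by
  have h1 := pow_convex_aux (a := (3/2 : ℝ)) (by norm_num) ht0 ht1
  have h2 := pow_convex_aux (a := (3/4 : ℝ)) (by norm_num) ht0 ht1
  nlinarith

theorem stmt_7 (β : ℝ) (hβ : β ∈ Set.Ioo (0:ℝ) 1) :
    StrictMonoOn (fun q : ℝ => ((1 - q) / 3) ^ β + (2 * (1 - q) / 3) ^ β + q ^ β)
      (Set.Icc (0:ℝ) (1/3)) := by
  obtain ⟨hβ0, hβ1⟩ := hβ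
  apply strictMonoOn_of_deriv_pos (convex_Icc _ _)
  · apply ContinuousOn.add
    apply ContinuousOn.add
    · exact ((Real.continuous_rpow_const hβ0.le).comp (by continuity)).continuousOn
    · exact ((Real.continuous_rpow_const hβ0.le).comp (by continuity)).continuousOn
    · exact (Real.continuous_rpow_const hβ0.le).continuousOn
  · intro q hq
    rw [interior_Icc] at hq
    obtain ⟨hq0, hq3⟩ := hq
    have h1q : 0 < (1 - q) / 3 := by linarith
    have h2q : 0 < 2 * (1 - q) / 3 := by linarith
    -- derivative computation
    have d1 : HasDerivAt (fun q : ℝ => ((1 - q) / 3) ^ β)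
        (β * ((1 - q) / 3) ^ (β - 1) * (-(1/3))) q := by
      have inner : HasDerivAt (fun q : ℝ => (1 - q) / 3) (-(1/3)) q := by
        have := ((hasDerivAt_id q).const_sub 1).div_const (3:ℝ)
        exact this.congr_deriv (by norm_num)
      exact (Real.hasDerivAt_rpow_const (Or.inl h1q.ne')).comp q inner
    have d2 : HasDerivAt (fun q : ℝ => (2 * (1 - q) / 3) ^ β)
        (β * (2 * (1 - q) / 3) ^ (β - 1) * (-(2/3))) q := by
      have inner : HasDerivAt (fun q : ℝ => 2 * (1 - q) / 3) (-(2/3)) q := by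
        have := (((hasDerivAt_id q).const_sub 1).const_mul 2).div_const (3 : ℝ)
        exact this.congr_deriv (by norm_num)
      exact (Real.hasDerivAt_rpow_const (Or.inl h2q.ne')).comp q inner
    have d3 : HasDerivAt (fun q : ℝ => q ^ β) (β * q ^ (β - 1)) q := by
      simpa using Real.hasDerivAt_rpow_const (p := β) (Or.inl hq0.ne')
    have hf : HasDerivAt (fun q : ℝ => ((1 - q) / 3) ^ β + (2 * (1 - q) / 3) ^ β + q ^ β)
        (β * ((1 - q) / 3) ^ (β - 1) * (-(1/3)) + β * (2 * (1 - q) / 3) ^ (β - 1) * (-(2/3))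
          + β * q ^ (β - 1)) q := (d1.add d2).add d3
    rw [hf.deriv]
    -- key inequality
    have hβ1' : β - 1 < 0 := by linarith
    have e1 : ((1 - q) / 3) ^ (β - 1) < (2/3 * q) ^ (β - 1) :=
      Real.rpow_lt_rpow_of_neg (by linarith) (by linarith) hβ1'
    have e2 : (2 * (1 - q) / 3) ^ (β - 1) < (4/3 * q) ^ (β - 1) :=
      Real.rpow_lt_rpow_of_neg (by linarith) (by linarith) hβ1'
    have m1 : (2/3 * q : ℝ) ^ (β - 1) = (3/2) ^ (1 - β) * q ^ (β - 1) := by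
      rw [Real.mul_rpow (by norm_num) hq0.le]
      congr 1
      rw [show (2/3 : ℝ) = (3/2)⁻¹ by norm_num, Real.inv_rpow (by norm_num),
        ← Real.rpow_neg (by norm_num)]
      ring_nf
    have m2 : (4/3 * q : ℝ) ^ (β - 1) = (3/4) ^ (1 - β) * q ^ (β - 1) := by
      rw [Real.mul_rpow (by norm_num) hq0.le]
      congr 1
      rw [show (4/3 : ℝ) = (3/4)⁻¹ by norm_num, Real.inv_rpow (by norm_num),
        ← Real.rpow_neg (by norm_num)]
      ring_nf
    have hkey := key_aux (t := 1 - β) (by linarith) (by linarith)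
    have hqpos : 0 < q ^ (β - 1) := Real.rpow_pos_of_pos hq0 _
    rw [m1] at e1
    rw [m2] at e2
    have hstep := mul_le_mul_of_nonneg_right hkey hqpos.le
    have hA : 1/3 * ((1 - q) / 3) ^ (β - 1) + 2/3 * (2 * (1 - q) / 3) ^ (β - 1)
        < q ^ (β - 1) := by nlinarith [hstep]
    have hfin := mul_lt_mul_of_pos_left hA hβ0
    nlinarith [hfin]
end

section
/- Fix Δ ∈ (0,1/4], ε ∈ (0,1), a ≥ ε, m ∈ [0, 1/Δ²], and define h and R as follows: h(x) = Δx²/2 for |x| ≤ 1/Δ, h(x) = |x| - 1/(2Δ) otherwise; R(x) = max{(a - ε/3)x, εx/3} + (ε/12)h(x) + (ε/12)mΔ²|x|. Let x be a real number and Y a real random variable with E[Y] ≥ x. Then E[R(Y)] - R(x) ≥ ε·(E[Y] - x)/6. -/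
open MeasureTheory

set_option maxHeartbeats 4000000 in
theorem stmt_10 (Δ ε a m : ℝ) (hΔ : Δ ∈ Set.Ioc (0:ℝ) (1/4)) (hε : ε ∈ Set.Ioo (0:ℝ) 1)
    (ha : ε ≤ a) (hm : m ∈ Set.Icc (0:ℝ) (1 / Δ ^ 2))
    (h : ℝ → ℝ)
    (hh : ∀ x, h x = if |x| ≤ 1 / Δ then Δ * x ^ 2 / 2 else |x| - 1 / (2 * Δ))
    (R : ℝ → ℝ)
    (hR : ∀ x, R x = max ((a - ε / 3) * x) (ε * x / 3) + ε / 12 * h x + ε / 12 * m * Δ ^ 2 * |x|)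
    (Ω : Type) [MeasurableSpace Ω] (P : Measure Ω) [IsProbabilityMeasure P]
    (Y : Ω → ℝ) (hY : Integrable Y P)
    (x : ℝ) (hx : x ≤ ∫ ω, Y ω ∂P) :
    ε * ((∫ ω, Y ω ∂P) - x) / 6 ≤ (∫ ω, R (Y ω) ∂P) - R x := by
  obtain ⟨hΔ0, hΔ4⟩ := hΔ
  obtain ⟨hε0, hε1⟩ := hε
  obtain ⟨hm0, hm1⟩ := hm
  have hΔinv : Δ * (1 / Δ) = 1 := by field_simp
  have h2Δ : Δ * (1 / (2 * Δ)) = 1 / 2 := by field_simp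
  have hmΔ : m * Δ ^ 2 ≤ 1 := by
    have h1 : m * Δ ^ 2 ≤ (1 / Δ ^ 2) * Δ ^ 2 :=
      mul_le_mul_of_nonneg_right hm1 (by positivity)
    have h2 : (1 / Δ ^ 2) * Δ ^ 2 = 1 := by field_simp
    linarith
  have hmΔ0 : 0 ≤ m * Δ ^ 2 := mul_nonneg hm0 (by positivity)
  -- subgradient components
  set c3 : ℝ := if 0 ≤ x then 1 else -1 with hc3
  set c2 : ℝ := if |x| ≤ 1 / Δ then Δ * x else c3 with hc2
  set c1 : ℝ := if 0 ≤ x then a - ε / 3 else ε / 3 with hc1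
  set c : ℝ := c1 + ε / 12 * c2 + ε / 12 * m * Δ ^ 2 * c3 with hc
  have hc1ge : ε / 3 ≤ c1 := by
    rw [hc1]; split_ifs with h0 <;> nlinarith
  have hc3abs : -1 ≤ c3 ∧ c3 ≤ 1 := by
    rw [hc3]; split_ifs <;> norm_num
  have hc2abs : -1 ≤ c2 ∧ c2 ≤ 1 := by
    rw [hc2]; split_ifs with h1
    · have hax : Δ * |x| ≤ 1 := by
        calc Δ * |x| ≤ Δ * (1 / Δ) := mul_le_mul_of_nonneg_left h1 hΔ0.le
        _ = 1 := hΔinv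
      constructor <;> cases abs_cases x <;> nlinarith
    · exact hc3abs
  have hcge : ε / 6 ≤ c := by
    rw [hc]
    have e2 : ε / 12 * (-1) ≤ ε / 12 * c2 :=
      mul_le_mul_of_nonneg_left hc2abs.1 (by positivity)
    have e3 : ε / 12 * m * Δ ^ 2 * (-1) ≤ ε / 12 * m * Δ ^ 2 * c3 :=
      mul_le_mul_of_nonneg_left hc3abs.1 (by positivity)
    nlinarith [e2, e3, hmΔ, hmΔ0, hc1ge]
  -- pointwise subgradient inequality
  have key : ∀ y : ℝ, R x + c * (y - x) ≤ R y := by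
    intro y
    have hxy : x * y ≤ |x| * |y| := le_trans (le_abs_self _) (abs_mul x y).le
    have pA : max ((a - ε / 3) * x) (ε * x / 3) + c1 * (y - x)
        ≤ max ((a - ε / 3) * y) (ε * y / 3) := by
      rw [hc1]
      rcases le_or_gt 0 x with h0 | h0
      · rw [if_pos h0, max_eq_left (by nlinarith)]
        calc (a - ε / 3) * x + (a - ε / 3) * (y - x) = (a - ε / 3) * y := by ring
        _ ≤ _ := le_max_left _ _
      · rw [if_neg (not_le.mpr h0), max_eq_right (by nlinarith)]
        calc ε * x / 3 + ε / 3 * (y - x) = ε * y / 3 := by ring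
        _ ≤ _ := le_max_right _ _
    have pB : h x + c2 * (y - x) ≤ h y := by
      rcases le_or_gt |x| (1 / Δ) with hx1 | hx1
      · have hc2v : c2 = Δ * x := by rw [hc2, if_pos hx1]
        have hax : Δ * |x| ≤ 1 := by
          calc Δ * |x| ≤ Δ * (1 / Δ) := mul_le_mul_of_nonneg_left hx1 hΔ0.le
          _ = 1 := hΔinv
        rw [hh x, hh y, if_pos hx1, hc2v]
        rcases le_or_gt |y| (1 / Δ) with hy1 | hy1
        · rw [if_pos hy1]
          nlinarith [sq_nonneg (y - x), hΔ0]
        · rw [if_neg (not_le.mpr hy1)]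
          have hay : 1 ≤ Δ * |y| := by
            calc (1:ℝ) = Δ * (1 / Δ) := hΔinv.symm
            _ ≤ Δ * |y| := mul_le_mul_of_nonneg_left hy1.le hΔ0.le
          have hprod : 0 ≤ (1 - Δ * |x|) * (2 * (Δ * |y|) - 1 - Δ * |x|) :=
            mul_nonneg (by linarith) (by linarith)
          nlinarith [hΔ0, h2Δ, hprod, sq_abs x, sq_nonneg Δ,
            mul_le_mul_of_nonneg_left hxy (by positivity : (0:ℝ) ≤ Δ ^ 2)]
      · have hc2v : c2 = c3 := by rw [hc2, if_neg (not_le.mpr hx1)]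
        rw [hh x, hh y, if_neg (not_le.mpr hx1), hc2v, hc3]
        rcases le_or_gt 0 x with h0 | h0
        · rw [if_pos h0, abs_of_nonneg h0]
          rcases le_or_gt |y| (1 / Δ) with hy1 | hy1
          · rw [if_pos hy1]
            nlinarith [hΔ0, h2Δ, sq_nonneg (Δ * y - 1)]
          · rw [if_neg (not_le.mpr hy1)]
            have := le_abs_self y
            nlinarith
        · rw [if_neg (not_le.mpr h0), abs_of_neg h0]
          rcases le_or_gt |y| (1 / Δ) with hy1 | hy1
          · rw [if_pos hy1]
            nlinarith [hΔ0, h2Δ, sq_nonneg (Δ * y + 1)]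
          · rw [if_neg (not_le.mpr hy1)]
            have := neg_abs_le y
            nlinarith
    have pC : |x| + c3 * (y - x) ≤ |y| := by
      rw [hc3]
      rcases le_or_gt 0 x with h0 | h0
      · rw [if_pos h0, abs_of_nonneg h0]
        have := le_abs_self y
        nlinarith
      · rw [if_neg (not_le.mpr h0), abs_of_neg h0]
        have := neg_abs_le y
        nlinarith
    have e1 : ε / 12 * (h x + c2 * (y - x)) ≤ ε / 12 * h y :=
      mul_le_mul_of_nonneg_left pB (by positivity)
    have e2 : ε / 12 * m * Δ ^ 2 * (|x| + c3 * (y - x)) ≤ ε / 12 * m * Δ ^ 2 * |y| :=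
      mul_le_mul_of_nonneg_left pC (by positivity)
    rw [hR x, hR y, hc]
    nlinarith [pA, e1, e2]
  -- bound |R y| ≤ (a + ε) * |y|
  have hHb : ∀ y : ℝ, 0 ≤ h y ∧ h y ≤ |y| := by
    intro y
    rw [hh y]
    split_ifs with h1
    · constructor
      · positivity
      · have hay : Δ * |y| ≤ 1 := by
          calc Δ * |y| ≤ Δ * (1 / Δ) := mul_le_mul_of_nonneg_left h1 hΔ0.le
          _ = 1 := hΔinv
        nlinarith [abs_nonneg y, sq_abs y]
    · push_neg at h1
      have h2 : 0 < 1 / (2 * Δ) := by positivity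
      have h3 : 1 / (2 * Δ) ≤ 1 / Δ := by
        rw [div_le_div_iff₀ (by linarith) hΔ0]; nlinarith
      constructor <;> linarith
  have habs : ∀ y : ℝ, |R y| ≤ (a + ε) * |y| := by
    intro y
    have hH := hHb y
    have hy1 := le_abs_self y
    have hy2 := neg_abs_le y
    have hy0 := abs_nonneg y
    have hK : m * Δ ^ 2 * |y| ≤ |y| := by nlinarith
    have hK0 : 0 ≤ m * Δ ^ 2 * |y| := by positivity
    rw [hR y, abs_le]
    constructor
    · have hmax : -((a - ε / 3) * |y|) ≤ max ((a - ε / 3) * y) (ε * y / 3) := by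
        refine le_trans ?_ (le_max_left _ _); nlinarith
      nlinarith [hmax, hH.1, hH.2]
    · have hmax : max ((a - ε / 3) * y) (ε * y / 3) ≤ a * |y| := by
        apply max_le <;> nlinarith
      nlinarith [hmax, hH.1, hH.2]
  -- integrability
  have hRfun : R = fun y => max ((a - ε / 3) * y) (ε * y / 3)
      + ε / 12 * (if |y| ≤ 1 / Δ then Δ * y ^ 2 / 2 else |y| - 1 / (2 * Δ))
      + ε / 12 * m * Δ ^ 2 * |y| := by
    funext y; rw [hR y, hh y]
  have hRmeas : Measurable R := by
    rw [hRfun]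
    apply Measurable.add
    apply Measurable.add
    · exact ((measurable_id.const_mul _).max ((measurable_id.const_mul ε).div_const 3))
    · apply Measurable.const_mul
      exact Measurable.ite (measurableSet_le (measurable_abs) measurable_const)
        (((measurable_id.pow_const 2).const_mul Δ).div_const 2)
        (measurable_abs.sub measurable_const)
    · exact measurable_abs.const_mul _
  have hmeas : AEStronglyMeasurable (fun ω => R (Y ω)) P :=
    (hRmeas.comp_aemeasurable hY.aemeasurable).aestronglyMeasurable
  have hintg : Integrable (fun ω => (a + ε) * |Y ω|) P := hY.abs.const_mul _
  have hint : Integrable (fun ω => R (Y ω)) P := by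
    refine hintg.mono hmeas (ae_of_all _ fun ω => ?_)
    rw [Real.norm_eq_abs, Real.norm_eq_abs,
      abs_of_nonneg (mul_nonneg (show (0:ℝ) ≤ a + ε by linarith) (abs_nonneg (Y ω)))]
    exact habs (Y ω)
  have hYx : Integrable (fun ω => Y ω - x) P := by
    exact hY.sub (integrable_const x)
  have hYx2 : Integrable (fun ω => c * (Y ω - x)) P := hYx.const_mul c
  have hint2 : Integrable (fun ω => R x + c * (Y ω - x)) P :=
    (integrable_const (R x)).add hYx2
  have h1 : ∫ ω, (R x + c * (Y ω - x)) ∂P ≤ ∫ ω, R (Y ω) ∂P :=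
    integral_mono hint2 hint fun ω => key (Y ω)
  have h2 : ∫ ω, (R x + c * (Y ω - x)) ∂P = R x + c * ((∫ ω, Y ω ∂P) - x) := by
    rw [integral_add (integrable_const _) hYx2, integral_const, integral_const_mul c _,
      integral_sub hY (integrable_const x), integral_const]
    simp
  rw [h2] at h1
  have h3 : ε * ((∫ ω, Y ω ∂P) - x) / 6 ≤ c * ((∫ ω, Y ω ∂P) - x) := by
    have h4 : 0 ≤ (∫ ω, Y ω ∂P) - x := by linarith
    nlinarith
  clear_value c3 c2 c1 c
  linarith [h1, h3]
end

section
/- For the sign-preservation-with-reuse game value opt(n,s) (the optimal expected number of signs preserved with n cells and s rounds), opt(n, 2s) ≤ 2·opt(n, s) for all n, s ∈ ℕ. -/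
/-- Value of the Sign-Preservation-with-Reuse (SPR) game from position `st` with a given
number of rounds remaining. `st i = some true` means a plus sign in cell `i`,
`some false` a minus sign, `none` an empty cell. In each round Player-P (the maximizer)
may terminate the game, or point at an empty cell `j`; Player-L (the minimizer) may then
remove any minus signs to the left of `j` and any plus signs to the right of `j`, and
places a sign in cell `j`. The payoff is the number of signs remaining at the end. -/
def sprVal (n : ℕ) : ℕ → (Fin n → Option Bool) → ℕ
  | 0, st => (Finset.univ.filter fun i => (st i).isSome).card
  | s + 1, st =>
      max ((Finset.univ.filter fun i => (st i).isSome).card)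
        ((Finset.univ.filter fun j => st j = none).sup fun j =>
          Finset.univ.inf' Finset.univ_nonempty fun b : Bool =>
            ((Finset.univ.filter fun i =>
                (i < j ∧ st i = some false) ∨ (j < i ∧ st i = some true)).powerset).inf'
              (Finset.powerset_nonempty _) fun R =>
                sprVal n s fun i => if i = j then some b else if i ∈ R then none else st i)

def opt (n s : ℕ) : ℕ := sprVal n s fun _ => none

namespace SPRaux

variable {n : ℕ}

def cnt (st : Fin n → Option Bool) : ℕ := (Finset.univ.filter fun i => (st i).isSome).card

def mg (u v : Fin n → Option Bool) : Fin n → Option Bool := fun i => (u i).elim (v i) some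

lemma mg_of_none {u v : Fin n → Option Bool} {i} (h : u i = none) : mg u v i = v i := by
  simp [mg, h]

lemma mg_of_some {u v : Fin n → Option Bool} {i} {b} (h : u i = some b) : mg u v i = some b := by
  simp [mg, h]

lemma cnt_mg_le (u v : Fin n → Option Bool) : cnt (mg u v) ≤ cnt u + cnt v := by
  unfold cnt
  refine le_trans (Finset.card_le_card ?_) (Finset.card_union_le _ _)
  intro i hi
  simp only [Finset.mem_filter, Finset.mem_univ, true_and, Finset.mem_union] at hi ⊢
  cases h : u i with
  | none => rw [mg_of_none h] at hi; exact Or.inr hi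
  | some b => exact Or.inl (by simp [h])

lemma inf'_add_le {α : Type*} {S : Finset α} (hS : S.Nonempty) {f g : α → ℕ} {c : ℕ}
    (h : ∀ a ∈ S, f a ≤ g a + c) : S.inf' hS f ≤ S.inf' hS g + c := by
  obtain ⟨a, ha, hg⟩ := S.exists_mem_eq_inf' hS g
  exact (Finset.inf'_le f ha).trans ((h a ha).trans (by rw [hg]))

lemma cnt_le_sprVal (s : ℕ) (st : Fin n → Option Bool) : cnt st ≤ sprVal n s st := by
  cases s with
  | zero => exact le_of_eq rfl
  | succ s => exact le_max_left _ _

lemma inf'_le_add {α : Type*} {S : Finset α} (hS : S.Nonempty) {f g : α → ℕ} {c : ℕ}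
    (h : ∀ a ∈ S, f a ≤ c + g a) : S.inf' hS f ≤ c + S.inf' hS g := by
  obtain ⟨a, ha, hg⟩ := S.exists_mem_eq_inf' hS g
  exact (Finset.inf'_le f ha).trans ((h a ha).trans (by rw [hg]))

lemma merge_le : ∀ (s : ℕ) (u v : Fin n → Option Bool), (∀ i, u i = none ∨ v i = none) →
    sprVal n s (mg u v) ≤ cnt u + sprVal n s v := by
  intro s
  induction s with
  | zero => intro u v _; exact cnt_mg_le u v
  | succ s ih =>
    intro u v hd
    show max _ _ ≤ cnt u + max _ _
    apply max_le
    · exact (cnt_mg_le u v).trans (Nat.add_le_add_left (le_max_left _ _) _)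
    · apply Finset.sup_le
      intro j hj
      simp only [Finset.mem_filter, Finset.mem_univ, true_and] at hj
      have huj : u j = none := by
        cases h : u j with
        | none => rfl
        | some b => rw [mg_of_some h] at hj; exact absurd hj (by simp)
      have hvj : v j = none := by rw [mg_of_none huj] at hj; exact hj
      have hjv : j ∈ Finset.univ.filter fun j => v j = none := by
        simp only [Finset.mem_filter, Finset.mem_univ, true_and]; exact hvj
      refine le_trans ?_ (Nat.add_le_add_left
        (le_trans (Finset.le_sup hjv) (le_max_right _ _)) (cnt u))
      apply inf'_le_add
      intro b _
      obtain ⟨R, hRmem', hEq⟩ := Finset.exists_mem_eq_inf' (Finset.powerset_nonempty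
        (Finset.univ.filter fun i => (i < j ∧ v i = some false) ∨ (j < i ∧ v i = some true)))
        (fun R => sprVal n s fun i => if i = j then some b else if i ∈ R then none else v i)
      rw [hEq]
      have hR : R ⊆ Finset.univ.filter fun i =>
          (i < j ∧ v i = some false) ∨ (j < i ∧ v i = some true) :=
        Finset.mem_powerset.mp hRmem'
      set v' : Fin n → Option Bool := fun i => if i = j then some b else if i ∈ R then none else v i with hv'
      have hveq : ∀ i ∈ R, ∃ c, v i = some c := by
        intro i hiR
        have := hR hiR
        simp only [Finset.mem_filter, Finset.mem_univ, true_and] at this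
        rcases this with ⟨_, h⟩ | ⟨_, h⟩ <;> exact ⟨_, h⟩
      have hstate : (fun i => if i = j then some b else if i ∈ R then none else mg u v i) = mg u v' := by
        funext i
        by_cases hij : i = j
        · subst hij; simp [mg_of_none huj, hv']
        · by_cases hiR : i ∈ R
          · obtain ⟨c, hc⟩ := hveq i hiR
            have hui : u i = none := (hd i).resolve_right (by simp [hc])
            simp [hij, hiR, mg_of_none hui, hv']
          · have hvv : v' i = v i := by simp [hv', hij, hiR]
            cases h : u i with
            | none => simp [hij, hiR, mg_of_none h, mg_of_none (v := v') h, hvv]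
            | some c => simp [hij, hiR, mg_of_some h, mg_of_some (v := v') h]
      have hd' : ∀ i, u i = none ∨ v' i = none := by
        intro i
        by_cases hij : i = j
        · subst hij; exact Or.inl huj
        · by_cases hiR : i ∈ R
          · exact Or.inr (by simp [hv', hij, hiR])
          · rcases hd i with h | h
            · exact Or.inl h
            · exact Or.inr (by simp [hv', hij, hiR, h])
      have hRmem : R ∈ (Finset.univ.filter fun i =>
          (i < j ∧ mg u v i = some false) ∨ (j < i ∧ mg u v i = some true)).powerset := by
        simp only [Finset.mem_powerset]
        intro i hiR
        have := hR hiR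
        simp only [Finset.mem_filter, Finset.mem_univ, true_and] at this ⊢
        obtain ⟨c, hc⟩ := hveq i hiR
        have hui : u i = none := (hd i).resolve_right (by simp [hc])
        rcases this with ⟨h1, h2⟩ | ⟨h1, h2⟩
        · exact Or.inl ⟨h1, by rw [mg_of_none hui]; exact h2⟩
        · exact Or.inr ⟨h1, by rw [mg_of_none hui]; exact h2⟩
      calc _ ≤ sprVal n s fun i => if i = j then some b else if i ∈ R then none else mg u v i :=
            Finset.inf'_le _ hRmem
        _ = sprVal n s (mg u v') := by rw [hstate]
        _ ≤ cnt u + sprVal n s v' := ih u v' hd'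

lemma sprVal_le_cnt_add_opt (s : ℕ) (st : Fin n → Option Bool) :
    sprVal n s st ≤ cnt st + opt n s := by
  have h2 : mg st (fun _ => none) = st := by
    funext i; cases h : st i with
    | none => exact mg_of_none h
    | some b => exact mg_of_some h
  have := merge_le s st (fun _ => none) (fun i => Or.inr rfl)
  rw [h2] at this
  exact this

lemma add_rounds (s t : ℕ) : ∀ (st : Fin n → Option Bool),
    sprVal n (t + s) st ≤ sprVal n t st + opt n s := by
  induction t with
  | zero =>
    intro st
    rw [Nat.zero_add]; exact sprVal_le_cnt_add_opt s st
  | succ t ih =>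
    intro st
    have he : t + 1 + s = (t + s) + 1 := by ring
    rw [he]
    show max _ _ ≤ max _ _ + opt n s
    refine max_le (le_trans (le_max_left _ _) (Nat.le_add_right _ _))
      (Finset.sup_le fun j hj => le_trans ?_
        (Nat.add_le_add_right (le_trans (Finset.le_sup hj) (le_max_right _ _)) _))
    apply inf'_add_le
    intro b _
    apply inf'_add_le
    intro R _
    exact ih _

end SPRaux

theorem stmt_12 (n s : ℕ) : opt n (2 * s) ≤ 2 * opt n s := by
  have h : 2 * s = s + s := by ring
  have := SPRaux.add_rounds (n := n) s s (fun _ => none)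
  rw [h]
  calc opt n (s + s) ≤ opt n s + opt n s := this
    _ = 2 * opt n s := by ring
end

section
/- For any d, k ∈ ℕ with d ≥ k, there exists an oblivious strategy for Player-P in the sign-preservation game with n = C(d,k)·2^(d-k) cells and s = C(d,k) rounds whose worst-case preservation probability is at least 2^(-k). In particular opt(n, s) ≥ s·2^(-k). -/
open scoped ENNReal

def NN (d k : ℕ) : ℕ := Nat.choose d k * 2 ^ (d - k)

/-- sample space of coin flips for the level-(d,k) strategy -/
def SPROmega : ℕ → ℕ → Type
  | 0, _ => Unit
  | _+1, 0 => Unit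
  | d+1, k+1 => Bool × SPROmega d k × SPROmega d (k+1)

instance instFintypeSPROmega : ∀ d k, Fintype (SPROmega d k)
  | 0, _ => inferInstanceAs (Fintype Unit)
  | _+1, 0 => inferInstanceAs (Fintype Unit)
  | d+1, k+1 =>
    letI := instFintypeSPROmega d k
    letI := instFintypeSPROmega d (k+1)
    inferInstanceAs (Fintype (Bool × SPROmega d k × SPROmega d (k+1)))

instance instInhabitedSPROmega : ∀ d k, Inhabited (SPROmega d k)
  | 0, _ => inferInstanceAs (Inhabited Unit)
  | _+1, 0 => inferInstanceAs (Inhabited Unit)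
  | d+1, k+1 =>
    letI := instInhabitedSPROmega d k
    letI := instInhabitedSPROmega d (k+1)
    inferInstanceAs (Inhabited (Bool × SPROmega d k × SPROmega d (k+1)))

instance (d k : ℕ) : Nonempty (SPROmega d k) := ⟨default⟩

/-- cell pointed at in round `r` by the level-(d,k) strategy with coins `ω` -/
def cellFn : (d k : ℕ) → SPROmega d k → ℕ → ℕ
  | 0, _, _, _ => 0
  | _+1, 0, _, _ => 0
  | d+1, k+1, ⟨e, w1, w2⟩, r =>
      if r < Nat.choose d k then NN d (k+1) + cellFn d k w1 r
      else (if e then NN d (k+1) + NN d k else 0) + cellFn d (k+1) w2 (r - Nat.choose d k)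

lemma NN_succ' (d k : ℕ) (h : k ≤ d) : NN (d+1) (k+1) = NN d (k+1) + NN d k + NN d (k+1) := by
  unfold NN
  rw [Nat.choose_succ_succ]
  rcases Nat.lt_or_ge k d with h' | h'
  · have e1 : d + 1 - (k+1) = d - k := by omega
    have e2 : d - k = (d - (k+1)) + 1 := by omega
    rw [e1, e2, pow_succ]
    ring
  · have : k = d := by omega
    subst this
    simp [Nat.choose_succ_self, Nat.choose_self]

lemma choose_pos_le (d k : ℕ) (h : 0 < Nat.choose d k) : k ≤ d := by
  by_contra hc
  rw [Nat.choose_eq_zero_of_lt (by omega)] at h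
  exact absurd h (by omega)

lemma cellFn_lt : ∀ d k, k ≤ d → ∀ (ω : SPROmega d k) (r : ℕ), r < Nat.choose d k →
    cellFn d k ω r < NN d k := by
  intro d
  induction d with
  | zero =>
    intro k hk ω r hr
    match k, hk with
    | 0, _ => show (0:ℕ) < NN 0 0; norm_num [NN]
  | succ d ih =>
    intro k hk ω r hr
    match k, ω with
    | 0, ω =>
      show (0:ℕ) < NN (d+1) 0
      simp only [NN, Nat.choose_zero_right, one_mul, Nat.sub_zero]
      exact pow_pos (by norm_num) _
    | k+1, ⟨e, w1, w2⟩ =>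
      have hk' : k ≤ d := by omega
      have hNs := NN_succ' d k hk'
      rw [Nat.choose_succ_succ, Nat.succ_eq_add_one] at hr
      show (if r < Nat.choose d k then NN d (k+1) + cellFn d k w1 r
        else (if e then NN d (k+1) + NN d k else 0) + cellFn d (k+1) w2 (r - Nat.choose d k))
          < NN (d+1) (k+1)
      split_ifs with h1 h2
      · have := ih k hk' w1 r h1
        omega
      · have hk2 : k+1 ≤ d := choose_pos_le d (k+1) (by omega)
        have := ih (k+1) hk2 w2 (r - Nat.choose d k) (by omega)
        omega
      · have hk2 : k+1 ≤ d := choose_pos_le d (k+1) (by omega)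
        have := ih (k+1) hk2 w2 (r - Nat.choose d k) (by omega)
        omega

lemma cellFn_inj : ∀ d k, k ≤ d → ∀ (ω : SPROmega d k) (r r' : ℕ), r < Nat.choose d k →
    r' < Nat.choose d k → cellFn d k ω r = cellFn d k ω r' → r = r' := by
  intro d
  induction d with
  | zero =>
    intro k hk ω r r' hr hr' _
    match k, hk with
    | 0, _ => simp [Nat.choose] at hr hr'; omega
  | succ d ih =>
    intro k hk ω r r' hr hr' heq
    match k, ω with
    | 0, ω => simp [Nat.choose] at hr hr'; omega
    | k+1, ⟨e, w1, w2⟩ =>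
      have hk' : k ≤ d := by omega
      rw [Nat.choose_succ_succ, Nat.succ_eq_add_one] at hr hr'
      have heq' : (if r < Nat.choose d k then NN d (k+1) + cellFn d k w1 r
          else (if e then NN d (k+1) + NN d k else 0) + cellFn d (k+1) w2 (r - Nat.choose d k))
          = (if r' < Nat.choose d k then NN d (k+1) + cellFn d k w1 r'
          else (if e then NN d (k+1) + NN d k else 0) + cellFn d (k+1) w2 (r' - Nat.choose d k)) := heq
      clear heq
      have hoff : (if e then NN d (k+1) + NN d k else 0) = 0 ∨
          (if e then NN d (k+1) + NN d k else 0) = NN d (k+1) + NN d k := by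
        cases e <;> simp
      by_cases h1 : r < Nat.choose d k <;> by_cases h2 : r' < Nat.choose d k
      · rw [if_pos h1, if_pos h2] at heq'
        exact ih k hk' w1 r r' h1 h2 (by omega)
      · rw [if_pos h1, if_neg h2] at heq'
        exfalso
        have hk2 : k+1 ≤ d := choose_pos_le d (k+1) (by omega)
        have b1 := ih
        have c1 := cellFn_lt d k hk' w1 r h1
        have c2 := cellFn_lt d (k+1) hk2 w2 (r' - Nat.choose d k) (by omega)
        omega
      · rw [if_neg h1, if_pos h2] at heq'
        exfalso
        have hk2 : k+1 ≤ d := choose_pos_le d (k+1) (by omega)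
        have c1 := cellFn_lt d k hk' w1 r' h2
        have c2 := cellFn_lt d (k+1) hk2 w2 (r - Nat.choose d k) (by omega)
        omega
      · rw [if_neg h1, if_neg h2] at heq'
        have hk2 : k+1 ≤ d := choose_pos_le d (k+1) (by omega)
        have := ih (k+1) hk2 w2 (r - Nat.choose d k) (r' - Nat.choose d k) (by omega) (by omega)
          (by omega)
        omega

open Finset in
lemma card_filter_snd_fst {β γ : Type*} [Fintype β] [Fintype γ]
    (p : β → Prop) [DecidablePred p] [DecidablePred fun ω : Bool × β × γ => p ω.2.1] :
    (Finset.univ.filter fun ω : Bool × β × γ => p ω.2.1).card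
      = 2 * ((Finset.univ.filter p).card * Fintype.card γ) := by
  have h : (Finset.univ.filter fun ω : Bool × β × γ => p ω.2.1)
      = Finset.univ ×ˢ ((Finset.univ.filter p) ×ˢ Finset.univ) := by
    ext ⟨e, x, y⟩
    simp
  rw [h, Finset.card_product, Finset.card_product, Finset.card_univ, Finset.card_univ,
    Fintype.card_bool]

open Finset in
lemma card_filter_bool_pair {β γ : Type*} [Fintype β] [Fintype γ] [DecidableEq β] [DecidableEq γ]
    (p : β → Prop) (q : Bool → γ → Prop) [DecidablePred p] [∀ e, DecidablePred (q e)]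
    [DecidablePred fun ω : Bool × β × γ => p ω.2.1 ∧ q ω.1 ω.2.2] :
    (Finset.univ.filter fun ω : Bool × β × γ => p ω.2.1 ∧ q ω.1 ω.2.2).card
      = (Finset.univ.filter p).card * (Finset.univ.filter (q true)).card
        + (Finset.univ.filter p).card * (Finset.univ.filter (q false)).card := by
  have h : (Finset.univ.filter fun ω : Bool × β × γ => p ω.2.1 ∧ q ω.1 ω.2.2)
      = (({true} : Finset Bool) ×ˢ ((Finset.univ.filter p) ×ˢ (Finset.univ.filter (q true))))
        ∪ (({false} : Finset Bool) ×ˢ ((Finset.univ.filter p) ×ˢ (Finset.univ.filter (q false)))) := by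
    ext ⟨e, x, y⟩
    cases e <;> simp
  rw [h, Finset.card_union_of_disjoint, Finset.card_product, Finset.card_product,
    Finset.card_product, Finset.card_product]
  · simp [mul_assoc]
  · rw [Finset.disjoint_left]
    rintro ⟨e, x, y⟩ h1 h2
    simp only [Finset.mem_product, Finset.mem_singleton] at h1 h2
    exact absurd (h1.1.symm.trans h2.1) (by simp)

def ltd (dir : Bool) (x y : ℕ) : Prop := if dir then x < y else y < x

lemma ltd_add_left (dir : Bool) (c x y : ℕ) : ltd dir (c + x) (c + y) ↔ ltd dir x y := by
  cases dir <;> simp [ltd]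

open Classical in
theorem cellFn_count : ∀ d k, k ≤ d → ∀ (dir : Bool) (i : ℕ), i < Nat.choose d k → ∀ g : ℕ → ℕ,
    (Finset.univ.filter fun ω : SPROmega d k => ∀ j, j ≤ i → cellFn d k ω j = g j).card
      ≤ 2 ^ k * (Finset.univ.filter fun ω : SPROmega d k =>
          (∀ j, j ≤ i → cellFn d k ω j = g j) ∧
          ∀ j, i < j → j < Nat.choose d k → ltd dir (cellFn d k ω i) (cellFn d k ω j)).card := by
  intro d
  induction d with
  | zero =>
    intro k hk dir i hi g
    match k, hk with
    | 0, _ =>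
      simp only [pow_zero, one_mul]
      apply Finset.card_le_card
      intro ω hω
      simp only [Finset.mem_filter, Finset.mem_univ, true_and] at hω ⊢
      refine ⟨hω, fun j hj hj' => ?_⟩
      exfalso
      have h1 : Nat.choose 0 0 = 1 := rfl
      omega
  | succ d ih =>
    intro k hk dir i hi g
    match k with
    | 0 =>
      simp only [pow_zero, one_mul]
      apply Finset.card_le_card
      intro ω hω
      simp only [Finset.mem_filter, Finset.mem_univ, true_and] at hω ⊢
      refine ⟨hω, fun j hj hj' => ?_⟩
      exfalso
      have h1 : Nat.choose (d+1) 0 = 1 := Nat.choose_zero_right _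
      omega
    | k+1 =>
      have hk' : k ≤ d := by omega
      rw [Nat.choose_succ_succ, Nat.succ_eq_add_one] at hi
      have hcell1 : ∀ (e : Bool) (w1 : SPROmega d k) (w2 : SPROmega d (k+1)) (r : ℕ),
          r < Nat.choose d k →
          cellFn (d+1) (k+1) (⟨e, w1, w2⟩ : SPROmega (d+1) (k+1)) r
            = NN d (k+1) + cellFn d k w1 r := by
        intro e w1 w2 r hr
        show (if r < Nat.choose d k then _ else _) = _
        rw [if_pos hr]
      have hcell2 : ∀ (e : Bool) (w1 : SPROmega d k) (w2 : SPROmega d (k+1)) (r : ℕ),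
          Nat.choose d k ≤ r →
          cellFn (d+1) (k+1) (⟨e, w1, w2⟩ : SPROmega (d+1) (k+1)) r
            = (if e then NN d (k+1) + NN d k else 0) + cellFn d (k+1) w2 (r - Nat.choose d k) := by
        intro e w1 w2 r hr
        show (if r < Nat.choose d k then _ else _) = _
        rw [if_neg (by omega)]
      have hchoose : Nat.choose (d+1) (k+1) = Nat.choose d k + Nat.choose d (k+1) := by
        rw [Nat.choose_succ_succ]
      rw [show (instDecidableEqNat : DecidableEq ℕ) = fun a b => Classical.propDecidable (a = b)
        from Subsingleton.elim _ _]
      show (Finset.univ.filter fun ω : Bool × SPROmega d k × SPROmega d (k+1) =>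
          ∀ j, j ≤ i → cellFn (d+1) (k+1) ω j = g j).card
        ≤ 2 ^ (k+1) * (Finset.univ.filter fun ω : Bool × SPROmega d k × SPROmega d (k+1) =>
          (∀ j, j ≤ i → cellFn (d+1) (k+1) ω j = g j) ∧
          ∀ j, i < j → j < Nat.choose (d+1) (k+1) →
            ltd dir (cellFn (d+1) (k+1) ω i) (cellFn (d+1) (k+1) ω j)).card
      rcases Nat.lt_or_ge i (Nat.choose d k) with hip | hip
      · -- phase 1 : i < choose d k
        set Q : SPROmega d k → Prop :=
          fun w1 => ∀ j, j ≤ i → NN d (k+1) + cellFn d k w1 j = g j with hQ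
        have hAeq : (Finset.univ.filter fun ω : Bool × SPROmega d k × SPROmega d (k+1) =>
            ∀ j, j ≤ i → cellFn (d+1) (k+1) ω j = g j)
            = Finset.univ.filter (fun ω : Bool × SPROmega d k × SPROmega d (k+1) => Q ω.2.1) := by
          apply Finset.filter_congr
          rintro ⟨e, w1, w2⟩ -
          refine forall_congr' fun j => forall_congr' fun hj => ?_
          rw [hcell1 e w1 w2 j (by omega)]
        rw [hAeq, card_filter_snd_fst]
        rcases Finset.eq_empty_or_nonempty (Finset.univ.filter Q) with hQe | ⟨w, hw⟩
        · rw [hQe]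
          simp
        · rw [Finset.mem_filter] at hw
          have hwQ : Q w := hw.2
          have hQeq : (Finset.univ.filter Q)
              = Finset.univ.filter (fun w1 => ∀ j, j ≤ i → cellFn d k w1 j = cellFn d k w j) := by
            apply Finset.filter_congr
            intro w1 _
            refine forall_congr' fun j => forall_congr' fun hj => ?_
            have := hwQ j hj
            omega
          have hIH := ih k hk' dir i hip (cellFn d k w)
          set Hst : SPROmega d k → Prop := fun w1 =>
            (∀ j, j ≤ i → cellFn d k w1 j = cellFn d k w j) ∧
            ∀ j, i < j → j < Nat.choose d k → ltd dir (cellFn d k w1 i) (cellFn d k w1 j) with hHst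
          have hBB : (({dir} : Finset Bool) ×ˢ ((Finset.univ.filter Hst) ×ˢ
              (Finset.univ : Finset (SPROmega d (k+1)))))
              ⊆ (Finset.univ.filter fun ω : Bool × SPROmega d k × SPROmega d (k+1) =>
                (∀ j, j ≤ i → cellFn (d+1) (k+1) ω j = g j) ∧
                ∀ j, i < j → j < Nat.choose (d+1) (k+1) →
                  ltd dir (cellFn (d+1) (k+1) ω i) (cellFn (d+1) (k+1) ω j)) := by
            rintro ⟨e, w1, w2⟩ hmem
            simp only [Finset.mem_product, Finset.mem_singleton, Finset.mem_filter,
              Finset.mem_univ, true_and, and_true] at hmem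
            obtain ⟨hedir, hhist, hfut⟩ := hmem
            rw [Finset.mem_filter]
            refine ⟨Finset.mem_univ _, fun j hj => ?_, fun j hj hj' => ?_⟩
            · rw [hcell1 e w1 w2 j (by omega), hhist j hj]
              have := hwQ j hj
              omega
            · rw [hchoose] at hj'
              rcases Nat.lt_or_ge j (Nat.choose d k) with hjs | hjs
              · rw [hcell1 e w1 w2 i hip, hcell1 e w1 w2 j hjs, ltd_add_left]
                exact hfut j hj hjs
              · rw [hcell1 e w1 w2 i hip, hcell2 e w1 w2 j hjs]
                have hk2 : k+1 ≤ d := choose_pos_le d (k+1) (by omega)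
                have hc1 : cellFn d k w1 i < NN d k := cellFn_lt d k hk' w1 i hip
                have hc2 : cellFn d (k+1) w2 (j - Nat.choose d k) < NN d (k+1) :=
                  cellFn_lt d (k+1) hk2 w2 (j - Nat.choose d k) (by omega)
                subst hedir
                cases e
                · show (if (false : Bool) then NN d (k+1) + NN d k else 0)
                      + cellFn d (k+1) w2 (j - Nat.choose d k)
                    < NN d (k+1) + cellFn d k w1 i
                  have hz : (if (false : Bool) then NN d (k+1) + NN d k else 0) = 0 := rfl
                  rw [hz]
                  omega
                · show NN d (k+1) + cellFn d k w1 i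
                    < (if (true : Bool) then NN d (k+1) + NN d k else 0)
                      + cellFn d (k+1) w2 (j - Nat.choose d k)
                  have hz : (if (true : Bool) then NN d (k+1) + NN d k else 0)
                      = NN d (k+1) + NN d k := rfl
                  rw [hz]
                  omega
          have hBcard := Finset.card_le_card hBB
          rw [Finset.card_product, Finset.card_product, Finset.card_singleton,
            Finset.card_univ, one_mul] at hBcard
          calc 2 * ((Finset.univ.filter Q).card * Fintype.card (SPROmega d (k+1)))
              ≤ 2 * ((2 ^ k * (Finset.univ.filter Hst).card)
                  * Fintype.card (SPROmega d (k+1))) := by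
                refine Nat.mul_le_mul_left _ (Nat.mul_le_mul_right _ ?_)
                rw [hQeq]
                exact hIH
            _ = 2 ^ (k+1) * ((Finset.univ.filter Hst).card
                  * Fintype.card (SPROmega d (k+1))) := by ring
            _ ≤ _ := Nat.mul_le_mul_left _ hBcard
      · -- phase 2 : choose d k ≤ i
        have hs2pos : 0 < Nat.choose d (k+1) := by omega
        have hk2 : k+1 ≤ d := choose_pos_le d (k+1) hs2pos
        set P1 : SPROmega d k → Prop :=
          fun w1 => ∀ j, j < Nat.choose d k → NN d (k+1) + cellFn d k w1 j = g j with hP1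
        set Q2 : Bool → SPROmega d (k+1) → Prop := fun e w2 => ∀ j', j' ≤ i - Nat.choose d k →
          (if e then NN d (k+1) + NN d k else 0) + cellFn d (k+1) w2 j'
            = g (j' + Nat.choose d k) with hQ2
        set F2 : SPROmega d (k+1) → Prop := fun w2 =>
          ∀ j', i - Nat.choose d k < j' → j' < Nat.choose d (k+1) →
          ltd dir (cellFn d (k+1) w2 (i - Nat.choose d k)) (cellFn d (k+1) w2 j') with hF2
        have hAiff : ∀ (e : Bool) (w1 : SPROmega d k) (w2 : SPROmega d (k+1)),
            (∀ j, j ≤ i → cellFn (d+1) (k+1) (⟨e, w1, w2⟩ : SPROmega (d+1) (k+1)) j = g j)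
              ↔ P1 w1 ∧ Q2 e w2 := by
          intro e w1 w2
          constructor
          · intro h
            refine ⟨fun j hj => ?_, fun j' hj' => ?_⟩
            · have := h j (by omega)
              rwa [hcell1 e w1 w2 j hj] at this
            · have := h (j' + Nat.choose d k) (by omega)
              rwa [hcell2 e w1 w2 _ (by omega), Nat.add_sub_cancel] at this
          · rintro ⟨h1, h2⟩ j hj
            rcases Nat.lt_or_ge j (Nat.choose d k) with hjs | hjs
            · rw [hcell1 e w1 w2 j hjs]
              exact h1 j hjs
            · rw [hcell2 e w1 w2 j hjs]
              have := h2 (j - Nat.choose d k) (by omega)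
              rwa [Nat.sub_add_cancel hjs] at this
        have hFiff : ∀ (e : Bool) (w1 : SPROmega d k) (w2 : SPROmega d (k+1)),
            (∀ j, i < j → j < Nat.choose (d+1) (k+1) →
              ltd dir (cellFn (d+1) (k+1) (⟨e, w1, w2⟩ : SPROmega (d+1) (k+1)) i)
                (cellFn (d+1) (k+1) (⟨e, w1, w2⟩ : SPROmega (d+1) (k+1)) j)) ↔ F2 w2 := by
          intro e w1 w2
          constructor
          · intro h j' h1 h2
            have := h (j' + Nat.choose d k) (by omega) (by omega)
            rwa [hcell2 e w1 w2 i hip, hcell2 e w1 w2 _ (by omega), Nat.add_sub_cancel,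
              ltd_add_left] at this
          · intro h j h1 h2
            rw [hcell2 e w1 w2 i hip, hcell2 e w1 w2 j (by omega), ltd_add_left]
            exact h (j - Nat.choose d k) (by omega) (by omega)
        have hAeq : (Finset.univ.filter fun ω : Bool × SPROmega d k × SPROmega d (k+1) =>
            ∀ j, j ≤ i → cellFn (d+1) (k+1) ω j = g j)
            = Finset.univ.filter (fun ω : Bool × SPROmega d k × SPROmega d (k+1) =>
                P1 ω.2.1 ∧ Q2 ω.1 ω.2.2) := by
          apply Finset.filter_congr
          rintro ⟨e, w1, w2⟩ -
          exact hAiff e w1 w2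
        have hBeq : (Finset.univ.filter fun ω : Bool × SPROmega d k × SPROmega d (k+1) =>
            (∀ j, j ≤ i → cellFn (d+1) (k+1) ω j = g j) ∧
            ∀ j, i < j → j < Nat.choose (d+1) (k+1) →
              ltd dir (cellFn (d+1) (k+1) ω i) (cellFn (d+1) (k+1) ω j))
            = Finset.univ.filter (fun ω : Bool × SPROmega d k × SPROmega d (k+1) =>
                P1 ω.2.1 ∧ (fun e w2 => Q2 e w2 ∧ F2 w2) ω.1 ω.2.2) := by
          apply Finset.filter_congr
          rintro ⟨e, w1, w2⟩ -
          rw [and_congr (hAiff e w1 w2) (hFiff e w1 w2)]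
          tauto
        rw [hAeq, hBeq, card_filter_bool_pair P1 Q2,
          card_filter_bool_pair P1 (fun e w2 => Q2 e w2 ∧ F2 w2)]
        have key : ∀ e : Bool, (Finset.univ.filter (Q2 e)).card
            ≤ 2^(k+1) * (Finset.univ.filter fun w2 => Q2 e w2 ∧ F2 w2).card := by
          intro e
          rcases Finset.eq_empty_or_nonempty (Finset.univ.filter (Q2 e)) with hQe | ⟨w, hw⟩
          · rw [hQe]
            simp
          · rw [Finset.mem_filter] at hw
            have hwQ : Q2 e w := hw.2
            have h1 : (Finset.univ.filter (Q2 e))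
                = Finset.univ.filter (fun w2 => ∀ j', j' ≤ i - Nat.choose d k →
                    cellFn d (k+1) w2 j' = cellFn d (k+1) w j') := by
              apply Finset.filter_congr
              intro w2 _
              refine forall_congr' fun j' => forall_congr' fun hj' => ?_
              have := hwQ j' hj'
              omega
            have h2 : (Finset.univ.filter fun w2 => Q2 e w2 ∧ F2 w2)
                = Finset.univ.filter (fun w2 => (∀ j', j' ≤ i - Nat.choose d k →
                    cellFn d (k+1) w2 j' = cellFn d (k+1) w j') ∧ F2 w2) := by
              apply Finset.filter_congr
              intro w2 _
              refine and_congr ?_ Iff.rfl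
              refine forall_congr' fun j' => forall_congr' fun hj' => ?_
              have := hwQ j' hj'
              omega
            rw [h1, h2]
            exact ih (k+1) hk2 dir (i - Nat.choose d k) (by omega) (cellFn d (k+1) w)
        calc (Finset.univ.filter P1).card * (Finset.univ.filter (Q2 true)).card
              + (Finset.univ.filter P1).card * (Finset.univ.filter (Q2 false)).card
            ≤ (Finset.univ.filter P1).card
                * (2^(k+1) * (Finset.univ.filter fun w2 => Q2 true w2 ∧ F2 w2).card)
              + (Finset.univ.filter P1).card
                * (2^(k+1) * (Finset.univ.filter fun w2 => Q2 false w2 ∧ F2 w2).card) :=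
            Nat.add_le_add (Nat.mul_le_mul_left _ (key true)) (Nat.mul_le_mul_left _ (key false))
          _ = 2^(k+1) * ((Finset.univ.filter P1).card
                * (Finset.univ.filter fun w2 => Q2 true w2 ∧ F2 w2).card
              + (Finset.univ.filter P1).card
                * (Finset.univ.filter fun w2 => Q2 false w2 ∧ F2 w2).card) := by ring

instance (d k : ℕ) : MeasurableSpace (SPROmega d k) := ⊤

def FF (d k : ℕ) (h : k ≤ d) (ω : SPROmega d k) : Fin (Nat.choose d k) → Fin (NN d k) :=
  fun r => ⟨cellFn d k ω r, cellFn_lt d k h ω r r.2⟩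

lemma measure_FF (d k : ℕ) (h : k ≤ d) (s : Set (Fin (Nat.choose d k) → Fin (NN d k)))
    [DecidablePred fun ω => FF d k h ω ∈ s] :
    ((PMF.uniformOfFintype (SPROmega d k)).map (FF d k h)).toMeasure s
      = ((Finset.univ.filter fun ω => FF d k h ω ∈ s).card : ℝ≥0∞)
          / (Fintype.card (SPROmega d k)) := by
  classical
  rw [PMF.toMeasure_map_apply _ _ _ measurable_from_top (s.toFinite.measurableSet)]
  rw [PMF.toMeasure_uniformOfFintype_apply _ (MeasurableSpace.measurableSet_top)]
  congr 2
  rw [← Fintype.card_subtype]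
  exact Fintype.card_congr' rfl

lemma ennreal_step (a b c : ℕ) (k : ℕ) (hab : a ≤ 2^k * b) :
    (2 : ℝ≥0∞)⁻¹ ^ k * ((a : ℝ≥0∞) / c) ≤ (b : ℝ≥0∞) / c := by
  have hcast : (a : ℝ≥0∞) ≤ 2^k * b := by
    calc (a : ℝ≥0∞) ≤ ((2^k * b : ℕ) : ℝ≥0∞) := by exact_mod_cast hab
      _ = 2^k * b := by push_cast; ring
  have h1 : (a : ℝ≥0∞) / c ≤ (2^k * (b : ℝ≥0∞)) / c := ENNReal.div_le_div_right hcast _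
  calc (2 : ℝ≥0∞)⁻¹ ^ k * ((a : ℝ≥0∞) / c)
      ≤ (2 : ℝ≥0∞)⁻¹ ^ k * ((2^k * (b : ℝ≥0∞)) / c) := mul_le_mul_right h1 _
    _ = ((2 : ℝ≥0∞)⁻¹ ^ k * 2^k) * ((b : ℝ≥0∞) / c) := by
        rw [mul_div_assoc]; ring
    _ = 1 * ((b : ℝ≥0∞) / c) := by
        rw [← mul_pow, ENNReal.inv_mul_cancel (by norm_num) (by norm_num), one_pow]
    _ = (b : ℝ≥0∞) / c := one_mul _

open Classical in
theorem partA (d k : ℕ) (hdk : k ≤ d) :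
    ∃ P : PMF (Fin (Nat.choose d k) → Fin (Nat.choose d k * 2 ^ (d - k))),
      (∀ σ ∈ P.support, Function.Injective σ) ∧
      (∀ (i : Fin (Nat.choose d k))
          (k' : Fin (Nat.choose d k) → Fin (Nat.choose d k * 2 ^ (d - k))),
        (2 : ℝ≥0∞)⁻¹ ^ k * P.toMeasure {σ | ∀ j ≤ i, σ j = k' j}
            ≤ P.toMeasure {σ | (∀ j ≤ i, σ j = k' j) ∧ ∀ j, i < j → σ i < σ j} ∧
        (2 : ℝ≥0∞)⁻¹ ^ k * P.toMeasure {σ | ∀ j ≤ i, σ j = k' j}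
            ≤ P.toMeasure {σ | (∀ j ≤ i, σ j = k' j) ∧ ∀ j, i < j → σ j < σ i}) := by
  refine ⟨(PMF.uniformOfFintype (SPROmega d k)).map (FF d k hdk), ?_, ?_⟩
  · intro σ hσ
    obtain ⟨ω, -, rfl⟩ := (PMF.mem_support_map_iff (FF d k hdk) _ σ).mp hσ
    intro r r' hrr
    have hval := congrArg Fin.val hrr
    exact Fin.ext (cellFn_inj d k hdk ω r r' r.2 r'.2 hval)
  · intro i k'
    set g : ℕ → ℕ := fun j => if h : j < Nat.choose d k then (k' ⟨j, h⟩ : ℕ) else 0 with hg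
    have histIff : ∀ ω : SPROmega d k,
        ((∀ j, j ≤ i → FF d k hdk ω j = k' j) ↔ (∀ j, j ≤ (i:ℕ) → cellFn d k ω j = g j)) := by
      intro ω
      constructor
      · intro h j hj
        have hjS : j < Nat.choose d k := lt_of_le_of_lt hj i.2
        have := congrArg Fin.val (h ⟨j, hjS⟩ hj)
        rw [hg]
        simpa [dif_pos hjS, FF] using this
      · intro h j hj
        apply Fin.ext
        have := h (j:ℕ) hj
        rw [hg] at this
        simpa [dif_pos j.2, Fin.eta, FF] using this
    have bridgeA : (Finset.univ.filter fun ω : SPROmega d k =>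
        FF d k hdk ω ∈ {σ : Fin (Nat.choose d k) → Fin (NN d k) | ∀ j, j ≤ i → σ j = k' j})
        = Finset.univ.filter fun ω => ∀ j, j ≤ (i:ℕ) → cellFn d k ω j = g j := by
      apply Finset.filter_congr
      intro ω _
      simpa using histIff ω
    have futIff : ∀ (dir : Bool) (ω : SPROmega d k),
        ((∀ j : Fin (Nat.choose d k), i < j →
            ltd dir (FF d k hdk ω i : ℕ) (FF d k hdk ω j : ℕ)) ↔
          (∀ j, (i:ℕ) < j → j < Nat.choose d k →
            ltd dir (cellFn d k ω i) (cellFn d k ω j))) := by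
      intro dir ω
      constructor
      · intro h j hj hjS
        exact h ⟨j, hjS⟩ hj
      · intro h j hj
        exact h (j:ℕ) hj j.2
    have bridgeB : ∀ dir : Bool, (Finset.univ.filter fun ω : SPROmega d k =>
        FF d k hdk ω ∈ {σ : Fin (Nat.choose d k) → Fin (NN d k) |
          (∀ j, j ≤ i → σ j = k' j) ∧ ∀ j : Fin (Nat.choose d k), i < j →
            ltd dir (σ i : ℕ) (σ j : ℕ)})
        = Finset.univ.filter fun ω => (∀ j, j ≤ (i:ℕ) → cellFn d k ω j = g j) ∧
            ∀ j, (i:ℕ) < j → j < Nat.choose d k →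
              ltd dir (cellFn d k ω i) (cellFn d k ω j) := by
      intro dir
      apply Finset.filter_congr
      intro ω _
      simp only [Set.mem_setOf_eq]
      exact and_congr (histIff ω) (futIff dir ω)
    have key : ∀ dir : Bool,
        (2 : ℝ≥0∞)⁻¹ ^ k * (((PMF.uniformOfFintype (SPROmega d k)).map (FF d k hdk)).toMeasure
            {σ | ∀ j, j ≤ i → σ j = k' j})
          ≤ ((PMF.uniformOfFintype (SPROmega d k)).map (FF d k hdk)).toMeasure
            {σ : Fin (Nat.choose d k) → Fin (NN d k) |
              (∀ j, j ≤ i → σ j = k' j) ∧ ∀ j : Fin (Nat.choose d k), i < j →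
                ltd dir (σ i : ℕ) (σ j : ℕ)} := by
      intro dir
      rw [measure_FF, measure_FF]
      have hstep := ennreal_step
        ((Finset.univ.filter fun ω => ∀ j, j ≤ (i:ℕ) → cellFn d k ω j = g j).card)
        ((Finset.univ.filter fun ω => (∀ j, j ≤ (i:ℕ) → cellFn d k ω j = g j) ∧
            ∀ j, (i:ℕ) < j → j < Nat.choose d k →
              ltd dir (cellFn d k ω (i:ℕ)) (cellFn d k ω j)).card)
        (Fintype.card (SPROmega d k)) k (cellFn_count d k hdk dir (i:ℕ) i.2 g)
      refine le_trans (le_of_eq ?_) (le_trans hstep (le_of_eq ?_))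
      · congr 3
        exact congrArg Finset.card bridgeA
      · congr 3
        exact (bridgeB dir).symm
    constructor
    · have := key true
      refine le_trans (le_of_eq ?_) (le_trans this (le_of_eq ?_))
      · rfl
      · congr 1
    · have := key false
      refine le_trans (le_of_eq ?_) (le_trans this (le_of_eq ?_))
      · rfl
      · congr 1




/-- guaranteed number of signs -/
def GG : ℕ → ℕ → ℕ
  | _, 0 => 1
  | 0, _+1 => 0
  | d+1, k+1 => (GG d k + 1) / 2 + GG d (k+1)

lemma GG_zero : ∀ d k, d < k → GG d k = 0 := by
  intro d
  induction d with
  | zero => intro k hk; match k, hk with | k+1, _ => rfl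
  | succ d ih =>
    intro k hk
    match k, hk with
    | k+1, hk =>
      show (GG d k + 1) / 2 + GG d (k+1) = 0
      rw [ih k (by omega), ih (k+1) (by omega)]

lemma choose_le_GG : ∀ d k, Nat.choose d k ≤ GG d k * 2 ^ k := by
  intro d
  induction d with
  | zero =>
    intro k
    match k with
    | 0 => simp [GG]
    | k+1 => simp [Nat.choose]
  | succ d ih =>
    intro k
    match k with
    | 0 => simp [GG]
    | k+1 =>
      have h1 := ih k
      have h2 := ih (k+1)
      show Nat.choose d k + Nat.choose d (k+1) ≤ ((GG d k + 1) / 2 + GG d (k+1)) * 2 ^ (k+1)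
      have : GG d k * 2 ^ k ≤ ((GG d k + 1) / 2) * 2 ^ (k+1) := by
        have : GG d k ≤ ((GG d k + 1) / 2) * 2 := by omega
        calc GG d k * 2 ^ k ≤ (((GG d k + 1) / 2) * 2) * 2 ^ k :=
              Nat.mul_le_mul_right _ this
          _ = ((GG d k + 1) / 2) * 2 ^ (k+1) := by ring
      calc Nat.choose d k + Nat.choose d (k+1) ≤ ((GG d k + 1) / 2) * 2 ^ (k+1) + GG d (k+1) * 2 ^ (k+1) := by
            exact Nat.add_le_add (le_trans h1 this) (le_trans h2 (Nat.mul_le_mul_left _ (by omega)))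
        _ = ((GG d k + 1) / 2 + GG d (k+1)) * 2 ^ (k+1) := by ring

/-- relation describing how the state can evolve while the strategy plays inside `[a,b)`:
left of `a` only minuses can disappear, right of `b` only pluses can disappear, and at
least `g` signs remain inside. -/
def SRel (n : ℕ) (st st' : Fin n → Option Bool) (a b g : ℕ) : Prop :=
  (∀ i : Fin n, (i:ℕ) < a → st' i = st i ∨ (st i = some false ∧ st' i = none)) ∧
  (∀ i : Fin n, b ≤ (i:ℕ) → st' i = st i ∨ (st i = some true ∧ st' i = none)) ∧
  g ≤ (Finset.univ.filter fun i : Fin n => a ≤ (i:ℕ) ∧ (i:ℕ) < b ∧ (st' i).isSome).card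

lemma spr_step (n s : ℕ) (st : Fin n → Option Bool) (j : Fin n) (hj : st j = none) (m : ℕ)
    (h : ∀ (b : Bool) (R : Finset (Fin n)),
      R ⊆ (Finset.univ.filter fun i => (i < j ∧ st i = some false) ∨ (j < i ∧ st i = some true)) →
      m ≤ sprVal n s (fun i => if i = j then some b else if i ∈ R then none else st i)) :
    m ≤ sprVal n (s+1) st := by
  rw [sprVal]
  refine le_trans ?_ (le_max_right _ _)
  refine le_trans ?_ (Finset.le_sup (b := j) (by simp [hj]))
  refine Finset.le_inf' _ _ fun b _ => ?_
  refine Finset.le_inf' _ _ fun R hR => ?_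
  exact h b R (Finset.mem_powerset.mp hR)

lemma main_triv (n a m extra : ℕ) (st : Fin n → Option Bool)
    (cont : ∀ st', SRel n st st' a a 0 → m ≤ sprVal n extra st') : m ≤ sprVal n extra st :=
  cont st ⟨fun _ _ => Or.inl rfl, fun _ _ => Or.inl rfl, Nat.zero_le _⟩

lemma main_one (n a m extra NV : ℕ) (st : Fin n → Option Bool) (hN : 1 ≤ NV)
    (hb : a + NV ≤ n)
    (hemp : ∀ i : Fin n, a ≤ (i:ℕ) → (i:ℕ) < a + NV → st i = none)
    (cont : ∀ st', SRel n st st' a (a + NV) 1 → m ≤ sprVal n extra st') :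
    m ≤ sprVal n (extra + 1) st := by
  have hj : a < n := by omega
  set j : Fin n := ⟨a, hj⟩ with hjdef
  have hjn : st j = none := hemp j (le_refl _) (by show a < a + NV; omega)
  refine spr_step n extra st j hjn m ?_
  intro b R hR
  refine cont _ ⟨?_, ?_, ?_⟩
  · intro i hi
    have hij : i ≠ j := by
      intro h; rw [h] at hi; exact absurd hi (by show ¬ a < a; omega)
    by_cases hiR : i ∈ R
    · have := hR hiR
      simp only [Finset.mem_filter, Finset.mem_univ, true_and] at this
      rcases this with ⟨_, hf⟩ | ⟨hlt, _⟩
      · exact Or.inr ⟨hf, by simp [hij, hiR]⟩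
      · exact absurd (hlt : (j:ℕ) < (i:ℕ)) (by show ¬ a < (i:ℕ); omega)
    · exact Or.inl (by simp [hij, hiR])
  · intro i hi
    have hij : i ≠ j := by
      intro h; rw [h] at hi; exact absurd hi (by show ¬ a + NV ≤ a; omega)
    by_cases hiR : i ∈ R
    · have := hR hiR
      simp only [Finset.mem_filter, Finset.mem_univ, true_and] at this
      rcases this with ⟨hlt, _⟩ | ⟨_, ht⟩
      · exact absurd (hlt : (i:ℕ) < (j:ℕ)) (by show ¬ (i:ℕ) < a; omega)
      · exact Or.inr ⟨ht, by simp [hij, hiR]⟩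
    · exact Or.inl (by simp [hij, hiR])
  · rw [Nat.one_le_iff_ne_zero, ← Nat.pos_iff_ne_zero, Finset.card_pos]
    refine ⟨j, ?_⟩
    simp [hjdef]
    omega

lemma NN_succ (d k : ℕ) (h : k ≤ d) : NN (d+1) (k+1) = NN d (k+1) + NN d k + NN d (k+1) := by
  unfold NN
  rw [Nat.choose_succ_succ]
  rcases Nat.lt_or_ge k d with h' | h'
  · have e1 : d + 1 - (k+1) = d - k := by omega
    have e2 : d - k = (d - (k+1)) + 1 := by omega
    rw [e1, e2, pow_succ]
    ring
  · have : k = d := by omega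
    subst this
    simp [Nat.choose_succ_self, Nat.choose_self]

lemma main_k0 (d n a m extra : ℕ) (st : Fin n → Option Bool)
    (hb : a + NN d 0 ≤ n)
    (hemp : ∀ i : Fin n, a ≤ (i:ℕ) → (i:ℕ) < a + NN d 0 → st i = none)
    (cont : ∀ st', SRel n st st' a (a + NN d 0) (GG d 0) → m ≤ sprVal n extra st') :
    m ≤ sprVal n (Nat.choose d 0 + extra) st := by
  have h1 : (1:ℕ) ≤ NN d 0 := by
    simp only [NN, Nat.choose_zero_right, one_mul]
    exact Nat.one_le_two_pow
  have := main_one n a m extra (NN d 0) st h1 hb hemp (fun st' hr => cont st' (by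
      have hg : GG d 0 = 1 := by cases d <;> rfl
      rw [hg]; exact hr))
  rw [Nat.choose_zero_right, Nat.add_comm]
  exact this

lemma main_trivk (d k n a m extra : ℕ) (st : Fin n → Option Bool) (h : d < k)
    (cont : ∀ st', SRel n st st' a (a + NN d k) (GG d k) → m ≤ sprVal n extra st') :
    m ≤ sprVal n (Nat.choose d k + extra) st := by
  have h0 : Nat.choose d k = 0 := Nat.choose_eq_zero_of_lt h
  have hN : NN d k = 0 := by simp [NN, h0]
  have hG : GG d k = 0 := GG_zero d k h
  rw [h0, Nat.zero_add]
  exact main_triv n a m extra st (fun st' hr => cont st' (by rw [hN, hG]; simpa using hr))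

theorem MAIN (d : ℕ) : ∀ (k n a m extra : ℕ) (st : Fin n → Option Bool),
    a + NN d k ≤ n →
    (∀ i : Fin n, a ≤ (i:ℕ) → (i:ℕ) < a + NN d k → st i = none) →
    (∀ st', SRel n st st' a (a + NN d k) (GG d k) → m ≤ sprVal n extra st') →
    m ≤ sprVal n (Nat.choose d k + extra) st := by
  induction d with
  | zero =>
    intro k n a m extra st hb hemp cont
    match k with
    | 0 => exact main_k0 0 n a m extra st hb hemp cont
    | k+1 => exact main_trivk 0 (k+1) n a m extra st (by omega) cont
  | succ d ih =>
    intro k n a m extra st hb hemp cont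
    match k with
    | 0 => exact main_k0 (d+1) n a m extra st hb hemp cont
    | k+1 =>
      rcases Nat.lt_or_ge (d+1) (k+1) with hkd | hkd
      · exact main_trivk (d+1) (k+1) n a m extra st hkd cont
      have hk : k ≤ d := by omega
      have hNs : NN (d+1) (k+1) = NN d (k+1) + NN d k + NN d (k+1) := NN_succ d k hk
      set n₁ := NN d k with hn1
      set n₂ := NN d (k+1) with hn2
      have hcs : Nat.choose (d+1) (k+1) + extra
          = Nat.choose d k + (Nat.choose d (k+1) + extra) := by
        rw [Nat.choose_succ_succ]; ring
      rw [hcs]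
      apply ih k n (a + n₂) m (Nat.choose d (k+1) + extra) st (by omega)
        (fun i h1 h2 => hemp i (by omega) (by omega))
      -- continuation after phase 1 (middle = [a+n₂, a+n₂+n₁))
      intro st' hrel1
      obtain ⟨L1, R1, C1⟩ := hrel1
      classical
      set Pl := Finset.univ.filter
        (fun i : Fin n => a + n₂ ≤ (i:ℕ) ∧ (i:ℕ) < a + n₂ + n₁ ∧ st' i = some true) with hPl
      set Mi := Finset.univ.filter
        (fun i : Fin n => a + n₂ ≤ (i:ℕ) ∧ (i:ℕ) < a + n₂ + n₁ ∧ st' i = some false) with hMi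
      have hPM : GG d k ≤ Pl.card + Mi.card := by
        refine le_trans C1 (le_trans (Finset.card_le_card ?_) (Finset.card_union_le _ _))
        intro i hi
        simp only [Finset.mem_filter, Finset.mem_univ, true_and, Finset.mem_union, hPl, hMi] at hi ⊢
        obtain ⟨h1, h2, h3⟩ := hi
        cases hx : st' i with
        | none => rw [hx] at h3; simp at h3
        | some bb =>
          cases bb
          · exact Or.inr ⟨h1, h2, rfl⟩
          · exact Or.inl ⟨h1, h2, rfl⟩
      rcases le_or_gt Mi.card Pl.card with hmaj | hmaj
      · -- go top: region [a+n₂+n₁, a+n₂+n₁+n₂)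
        apply ih (k+1) n (a + n₂ + n₁) m extra st' (by omega) ?hemp2 ?cont2
        case hemp2 =>
          intro i hi1 hi2
          have hnone : st i = none := hemp i (by omega) (by omega)
          rcases R1 i (by omega) with h | ⟨h, _⟩
          · rw [h, hnone]
          · rw [hnone] at h; exact absurd h (by simp)
        case cont2 =>
          intro st'' hrel2
          obtain ⟨L2, R2, C2⟩ := hrel2
          apply cont st''
          refine ⟨?_, ?_, ?_⟩
          · intro i hi
            rcases L2 i (by omega) with h2 | ⟨h2, h2'⟩
            · rcases L1 i (by omega) with h1 | ⟨h1, h1'⟩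
              · exact Or.inl (h2.trans h1)
              · exact Or.inr ⟨h1, by rw [h2, h1']⟩
            · rcases L1 i (by omega) with h1 | ⟨h1, h1'⟩
              · exact Or.inr ⟨h1 ▸ h2, h2'⟩
              · exact absurd (h1'.symm.trans h2) (by simp)
          · intro i hi
            rcases R2 i (by omega) with h2 | ⟨h2, h2'⟩
            · rcases R1 i (by omega) with h1 | ⟨h1, h1'⟩
              · exact Or.inl (h2.trans h1)
              · exact Or.inr ⟨h1, by rw [h2, h1']⟩
            · rcases R1 i (by omega) with h1 | ⟨h1, h1'⟩
              · exact Or.inr ⟨h1 ▸ h2, h2'⟩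
              · exact absurd (h1'.symm.trans h2) (by simp)
          · -- count
            have hPl'' : ∀ i ∈ Pl, st'' i = some true := by
              intro i hi
              simp only [hPl, Finset.mem_filter, Finset.mem_univ, true_and] at hi
              rcases L2 i (by omega) with h2 | ⟨h2, _⟩
              · rw [h2, hi.2.2]
              · rw [hi.2.2] at h2; exact absurd h2 (by simp)
            set U := Finset.univ.filter
              (fun i : Fin n => a + n₂ + n₁ ≤ (i:ℕ) ∧ (i:ℕ) < a + n₂ + n₁ + n₂ ∧ (st'' i).isSome) with hU
            have hdisj : Disjoint Pl U := by
              rw [Finset.disjoint_left]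
              intro i hi hiU
              simp only [hPl, hU, Finset.mem_filter, Finset.mem_univ, true_and] at hi hiU
              omega
            have hsub : Pl ∪ U ⊆ Finset.univ.filter
                (fun i : Fin n => a ≤ (i:ℕ) ∧ (i:ℕ) < a + NN (d+1) (k+1) ∧ (st'' i).isSome) := by
              intro i hi
              rcases Finset.mem_union.mp hi with h | h
              · have ht := hPl'' i h
                simp only [hPl, Finset.mem_filter, Finset.mem_univ, true_and] at h
                simp only [Finset.mem_filter, Finset.mem_univ, true_and]
                exact ⟨by omega, by omega, by simp [ht]⟩
              · simp only [hU, Finset.mem_filter, Finset.mem_univ, true_and] at h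
                simp only [Finset.mem_filter, Finset.mem_univ, true_and]
                exact ⟨by omega, by omega, h.2.2⟩
            have hcard := Finset.card_le_card hsub
            rw [Finset.card_union_of_disjoint hdisj] at hcard
            have hGle : GG (d+1) (k+1) ≤ Pl.card + U.card := by
              show (GG d k + 1)/2 + GG d (k+1) ≤ _
              exact Nat.add_le_add (by omega) C2
            exact le_trans hGle hcard
      · -- go bottom: region [a, a+n₂)
        apply ih (k+1) n a m extra st' (by omega) ?hemp2' ?cont2'
        case hemp2' =>
          intro i hi1 hi2
          have hnone : st i = none := hemp i (by omega) (by omega)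
          rcases L1 i (by omega) with h | ⟨h, _⟩
          · rw [h, hnone]
          · rw [hnone] at h; exact absurd h (by simp)
        case cont2' =>
          intro st'' hrel2
          obtain ⟨L2, R2, C2⟩ := hrel2
          apply cont st''
          refine ⟨?_, ?_, ?_⟩
          · intro i hi
            rcases L2 i (by omega) with h2 | ⟨h2, h2'⟩
            · rcases L1 i (by omega) with h1 | ⟨h1, h1'⟩
              · exact Or.inl (h2.trans h1)
              · exact Or.inr ⟨h1, by rw [h2, h1']⟩
            · rcases L1 i (by omega) with h1 | ⟨h1, h1'⟩
              · exact Or.inr ⟨h1 ▸ h2, h2'⟩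
              · exact absurd (h1'.symm.trans h2) (by simp)
          · intro i hi
            rcases R2 i (by omega) with h2 | ⟨h2, h2'⟩
            · rcases R1 i (by omega) with h1 | ⟨h1, h1'⟩
              · exact Or.inl (h2.trans h1)
              · exact Or.inr ⟨h1, by rw [h2, h1']⟩
            · rcases R1 i (by omega) with h1 | ⟨h1, h1'⟩
              · exact Or.inr ⟨h1 ▸ h2, h2'⟩
              · exact absurd (h1'.symm.trans h2) (by simp)
          · -- count
            have hMi'' : ∀ i ∈ Mi, st'' i = some false := by
              intro i hi
              simp only [hMi, Finset.mem_filter, Finset.mem_univ, true_and] at hi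
              rcases R2 i (by omega) with h2 | ⟨h2, _⟩
              · rw [h2, hi.2.2]
              · rw [hi.2.2] at h2; exact absurd h2 (by simp)
            set U := Finset.univ.filter
              (fun i : Fin n => a ≤ (i:ℕ) ∧ (i:ℕ) < a + n₂ ∧ (st'' i).isSome) with hU
            have hdisj : Disjoint Mi U := by
              rw [Finset.disjoint_left]
              intro i hi hiU
              simp only [hMi, hU, Finset.mem_filter, Finset.mem_univ, true_and] at hi hiU
              omega
            have hsub : Mi ∪ U ⊆ Finset.univ.filter
                (fun i : Fin n => a ≤ (i:ℕ) ∧ (i:ℕ) < a + NN (d+1) (k+1) ∧ (st'' i).isSome) := by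
              intro i hi
              rcases Finset.mem_union.mp hi with h | h
              · have ht := hMi'' i h
                simp only [hMi, Finset.mem_filter, Finset.mem_univ, true_and] at h
                simp only [Finset.mem_filter, Finset.mem_univ, true_and]
                exact ⟨by omega, by omega, by simp [ht]⟩
              · simp only [hU, Finset.mem_filter, Finset.mem_univ, true_and] at h
                simp only [Finset.mem_filter, Finset.mem_univ, true_and]
                exact ⟨by omega, by omega, h.2.2⟩
            have hcard := Finset.card_le_card hsub
            rw [Finset.card_union_of_disjoint hdisj] at hcard
            have hGle : GG (d+1) (k+1) ≤ Mi.card + U.card := by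
              show (GG d k + 1)/2 + GG d (k+1) ≤ _
              exact Nat.add_le_add (by omega) C2
            exact le_trans hGle hcard

theorem GG_le_opt (d k : ℕ) : GG d k ≤ opt (NN d k) (Nat.choose d k) := by
  have h := MAIN d k (NN d k) 0 (GG d k) 0 (fun _ => none) (by omega)
    (fun i _ _ => rfl) ?_
  · rw [Nat.add_zero] at h
    exact h
  · rintro st' ⟨_, _, C⟩
    show GG d k ≤ (Finset.univ.filter fun i => (st' i).isSome).card
    refine le_trans C (Finset.card_le_card ?_)
    intro i hi
    simp only [Finset.mem_filter, Finset.mem_univ, true_and] at hi ⊢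
    exact hi.2.2

/-- Existence of an oblivious no-reuse strategy for Player-P in the sign-preservation game
with `n = C(d,k)·2^(d-k)` cells and `s = C(d,k)` rounds whose worst-case preservation
probability is at least `2^(-k)`; in particular `opt n s ≥ s·2^(-k)`. The strategy is a
distribution over sequences of cells with almost surely distinct coordinates, such that
conditioned on any positive-probability history through round `i`, with probability at
least `2^(-k)` all future cells lie strictly above the `i`-th cell, and likewise with
probability at least `2^(-k)` they all lie strictly below it. -/
theorem stmt_13 (d k : ℕ) (hdk : k ≤ d) :
    (∃ P : PMF (Fin (Nat.choose d k) → Fin (Nat.choose d k * 2 ^ (d - k))),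
      (∀ σ ∈ P.support, Function.Injective σ) ∧
      (∀ (i : Fin (Nat.choose d k))
          (k' : Fin (Nat.choose d k) → Fin (Nat.choose d k * 2 ^ (d - k))),
        (2 : ℝ≥0∞)⁻¹ ^ k * P.toMeasure {σ | ∀ j ≤ i, σ j = k' j}
            ≤ P.toMeasure {σ | (∀ j ≤ i, σ j = k' j) ∧ ∀ j, i < j → σ i < σ j} ∧
        (2 : ℝ≥0∞)⁻¹ ^ k * P.toMeasure {σ | ∀ j ≤ i, σ j = k' j}
            ≤ P.toMeasure {σ | (∀ j ≤ i, σ j = k' j) ∧ ∀ j, i < j → σ j < σ i})) ∧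
    (Nat.choose d k : ℝ) * (2 : ℝ)⁻¹ ^ k ≤ (opt (Nat.choose d k * 2 ^ (d - k)) (Nat.choose d k) : ℝ) := by
  constructor
  · exact partA d k hdk
  · have h1 : Nat.choose d k ≤ GG d k * 2 ^ k := choose_le_GG d k
    have h2 : GG d k ≤ opt (Nat.choose d k * 2 ^ (d - k)) (Nat.choose d k) := GG_le_opt d k
    have h3 : (Nat.choose d k : ℝ)
        ≤ (opt (Nat.choose d k * 2 ^ (d - k)) (Nat.choose d k) : ℝ) * 2 ^ k := by
      have := le_trans h1 (Nat.mul_le_mul_right (2 ^ k) h2)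
      exact_mod_cast this
    rw [inv_pow, ← div_eq_mul_inv, div_le_iff₀ (by positivity)]
    exact h3
end

section
/- There exists λ ∈ (0,1) such that 1 - (h(λ)+1)/(3h(λ) + 2 - 2λ) > 0.543895, where h(p) = -p·log₂(p) - (1-p)·log₂(1-p) is the binary entropy function. -/
open Real Finset

lemma aux_v : Real.log ((15229:ℝ)/12500) < 0.1974729 := by
  rw [Real.log_lt_iff_lt_exp (by norm_num)]
  have h := Real.sum_le_exp_of_nonneg (x := 0.1974729) (by norm_num) 8
  refine lt_of_lt_of_le ?_ h
  simp only [Finset.sum_range_succ, Finset.sum_range_zero, Nat.factorial]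
  norm_num

lemma aux_w : Real.log ((84771:ℝ)/100000) < -0.1652166 := by
  rw [Real.log_lt_iff_lt_exp (by norm_num)]
  rw [show (-0.1652166 : ℝ) = -(0.1652166) by norm_num, Real.exp_neg]
  rw [lt_inv_comm₀ (by norm_num) (Real.exp_pos _)]
  have h := Real.exp_bound' (x := 0.1652166) (by norm_num) (by norm_num) (n := 8) (by norm_num)
  refine lt_of_le_of_lt h ?_
  simp only [Finset.sum_range_succ, Finset.sum_range_zero, Nat.factorial]
  norm_num

theorem stmt_18 :
    ∃ lam ∈ Set.Ioo (0:ℝ) 1,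
      0.543895 <
        1 - ((-lam * Real.logb 2 lam - (1 - lam) * Real.logb 2 (1 - lam)) + 1) /
          (3 * (-lam * Real.logb 2 lam - (1 - lam) * Real.logb 2 (1 - lam)) + 2 - 2 * lam) := by
  refine ⟨0.15229, ⟨by norm_num, by norm_num⟩, ?_⟩
  have hlog1 : Real.log (0.15229:ℝ) = Real.log ((15229:ℝ)/12500) - 3 * Real.log 2 := by
    rw [show (0.15229:ℝ) = ((15229:ℝ)/12500)/2^3 by norm_num,
      Real.log_div (by norm_num) (by norm_num), Real.log_pow]
    push_cast; ring
  have hlog2 : (1:ℝ) - 0.15229 = (84771:ℝ)/100000 := by norm_num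
  have hv := aux_v
  have hw := aux_w
  have hl2lo := Real.log_two_gt_d9
  have hl2hi := Real.log_two_lt_d9
  have hl2pos : (0:ℝ) < Real.log 2 := by linarith
  simp only [Real.logb, hlog2, hlog1]
  set v := Real.log ((15229:ℝ)/12500) with hvdef
  set w := Real.log ((84771:ℝ)/100000) with hwdef
  set l2 := Real.log 2 with hl2def
  set h : ℝ := -0.15229 * ((v - 3 * l2) / l2) - (84771:ℝ)/100000 * (w / l2) with hhdef
  have hhlo : (0.61554:ℝ) < h := by
    have hh2 : h = (0.15229 * (3 * l2 - v) - 84771/100000 * w) / l2 := by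
      rw [hhdef]; field_simp; ring
    rw [hh2, lt_div_iff₀ hl2pos]
    nlinarith
  have hD : (0:ℝ) < 3 * h + 2 - 2 * 0.15229 := by linarith
  have key : (h + 1) / (3 * h + 2 - 2 * 0.15229) < 0.456105 := by
    rw [div_lt_iff₀ hD]; nlinarith
  linarith
end

section
/- Let β ∈ (0,1). The function g(p) = p^β + (1-p)^β/(2^β - 1) is decreasing on [1/2, 1]. -/
theorem stmt_19 (β : ℝ) (hβ : β ∈ Set.Ioo (0:ℝ) 1) :
    StrictAntiOn (fun p : ℝ => p ^ β + (1 - p) ^ β / (2 ^ β - 1))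
      (Set.Icc (1/2 : ℝ) 1) := by
  obtain ⟨hβ0, hβ1⟩ := hβ
  have hc : 0 < (2:ℝ) ^ β - 1 := by
    have : (1:ℝ) < 2 ^ β :=
      (Real.one_lt_rpow_iff_of_pos (by norm_num)).mpr (Or.inl ⟨by norm_num, hβ0⟩)
    linarith
  have hc1 : (2:ℝ) ^ β - 1 < 1 := by
    have : (2:ℝ) ^ β < 2 ^ (1:ℝ) :=
      Real.rpow_lt_rpow_of_exponent_lt (by norm_num) hβ1
    rw [Real.rpow_one] at this
    linarith
  apply strictAntiOn_of_deriv_neg (convex_Icc _ _)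
  · have h1 : Continuous fun p : ℝ => p ^ β :=
      continuous_iff_continuousAt.mpr fun x =>
        Real.continuousAt_rpow_const x β (Or.inr hβ0.le)
    have h2 : Continuous fun p : ℝ => (1 - p) ^ β :=
      h1.comp (continuous_const.sub continuous_id)
    exact (h1.add (h2.div_const _)).continuousOn
  · intro x hx
    rw [interior_Icc] at hx
    obtain ⟨hx1, hx2⟩ := hx
    have hx0 : 0 < x := by linarith
    have h1x : 0 < 1 - x := by linarith
    have d1 : HasDerivAt (fun p : ℝ => p ^ β) (β * x ^ (β - 1)) x :=
      Real.hasDerivAt_rpow_const (Or.inl hx0.ne')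
    have d2 : HasDerivAt (fun p : ℝ => (1 - p) ^ β)
        (β * (1 - x) ^ (β - 1) * (-1)) x := by
      have dinner : HasDerivAt (fun p : ℝ => 1 - p) (-1) x :=
        (hasDerivAt_id x).const_sub 1
      exact (Real.hasDerivAt_rpow_const (p := β) (Or.inl h1x.ne')).comp x dinner
    have hd : HasDerivAt (fun p : ℝ => p ^ β + (1 - p) ^ β / (2 ^ β - 1))
        (β * x ^ (β - 1) + (β * (1 - x) ^ (β - 1) * (-1)) / (2 ^ β - 1)) x :=
      d1.add (d2.div_const _)
    rw [hd.deriv]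
    have key : x ^ (β - 1) < (1 - x) ^ (β - 1) :=
      Real.rpow_lt_rpow_of_neg h1x (by linarith) (by linarith)
    have h3 : β * x ^ (β - 1) < β * (1 - x) ^ (β - 1) := by
      exact mul_lt_mul_of_pos_left key hβ0
    have h4 : β * (1 - x) ^ (β - 1) ≤ β * (1 - x) ^ (β - 1) / (2 ^ β - 1) :=
      le_div_self (by positivity) hc hc1.le
    have : (β * (1 - x) ^ (β - 1) * (-1)) / (2 ^ β - 1)
        = -(β * (1 - x) ^ (β - 1) / (2 ^ β - 1)) := by ring
    rw [this]
    linarith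
end
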